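/- For every m > 0 and every z ∈ ℂ, one has max{|z+m|, |z−m|} · (1 + |z²−m²|²)^{-1/4} ≤ 2m + 1. -/
import Mathlib


/-- For `m > 0` and `z ∈ ℂ`: `max{|z+m|, |z−m|} · (1 + |z²−m²|²)^{-1/4} ≤ 2m + 1`,
i.e. `max{|z+m|,|z−m|} ≤ (2m+1)⟨z²−m²⟩^{1/2}` with the Japanese bracket. -/
theorem max_div_bracket_le (m : ℝ) (hm : 0 < m) (z : ℂ) :
    max ‖z + (m : ℂ)‖ ‖z - (m : ℂ)‖ * (1 + ‖z ^ 2 - (m : ℂ) ^ 2‖ ^ 2) ^ (-(1/4) : ℝ)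
      ≤ 2 * m + 1 := by
  set a := ‖z + (m : ℂ)‖ with ha
  set b := ‖z - (m : ℂ)‖ with hb
  set P := ‖z ^ 2 - (m : ℂ) ^ 2‖ with hPdef
  have hP : P = a * b := by
    rw [hPdef, ha, hb, ← norm_mul]
    congr 1
    ring
  have ha0 : (0:ℝ) ≤ a := norm_nonneg _
  have hb0 : (0:ℝ) ≤ b := norm_nonneg _
  have hbase : (1:ℝ) ≤ 1 + P ^ 2 := by nlinarith [sq_nonneg P]
  have hpos : (0:ℝ) < 1 + P ^ 2 := by linarith
  have hr1 : (1:ℝ) ≤ (1 + P ^ 2) ^ ((1/4) : ℝ) :=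
    Real.one_le_rpow hbase (by norm_num)
  have hrpos : (0:ℝ) < (1 + P ^ 2) ^ ((1/4) : ℝ) := lt_of_lt_of_le one_pos hr1
  rw [Real.rpow_neg (le_of_lt hpos), mul_inv_le_iff₀ hrpos]
  have hdiff : max a b ≤ min a b + 2 * m := by
    have h2m : ‖(z + (m:ℂ)) - (z - (m:ℂ))‖ = 2 * m := by
      have : (z + (m:ℂ)) - (z - (m:ℂ)) = ((2 * m : ℝ) : ℂ) := by push_cast; ring
      rw [this, Complex.norm_real, Real.norm_of_nonneg (by linarith)]
    have habs := abs_norm_sub_norm_le (z + (m:ℂ)) (z - (m:ℂ))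
    rw [h2m] at habs
    obtain ⟨h2, h1⟩ := abs_le.mp habs
    rcases le_total a b with h | h
    · rw [max_eq_right h, min_eq_left h]; linarith
    · rw [max_eq_left h, min_eq_right h]; linarith
  set n := min a b with hn
  set M := max a b with hM
  have hn0 : (0:ℝ) ≤ n := le_min ha0 hb0
  have hnM : n * M = P := by rw [hP, hn, hM, min_mul_max]
  rcases le_total n 1 with hle | hgt
  · calc M ≤ n + 2 * m := hdiff
      _ ≤ 1 + 2 * m := by linarith
      _ = (2 * m + 1) * 1 := by ring
      _ ≤ (2 * m + 1) * (1 + P ^ 2) ^ ((1/4) : ℝ) := by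
          apply mul_le_mul_of_nonneg_left hr1 (by linarith)
  · have hM0 : (0:ℝ) ≤ M := le_max_of_le_left ha0
    have h4 : n ^ 4 ≤ 1 + P ^ 2 := by nlinarith [hnM, mul_le_mul_of_nonneg_left (min_le_max : n ≤ M) hn0]
    have hnr : n ≤ (1 + P ^ 2) ^ ((1/4) : ℝ) := by
      have := Real.rpow_le_rpow (by positivity) h4 (by norm_num : (0:ℝ) ≤ 1/4)
      rwa [show ((n:ℝ) ^ 4) = n ^ (4:ℝ) by rw [← Real.rpow_natCast n 4]; norm_num,
        ← Real.rpow_mul hn0, show (4:ℝ) * (1/4) = 1 by norm_num, Real.rpow_one] at this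
    calc M ≤ n + 2 * m := hdiff
      _ ≤ n + 2 * m * n := by nlinarith
      _ = (2 * m + 1) * n := by ring
      _ ≤ (2 * m + 1) * (1 + P ^ 2) ^ ((1/4) : ℝ) := by
          apply mul_le_mul_of_nonneg_left hnr (by linarith)
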